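/- Suppose M satisfies conditions (*) and (**), λ ≠ 0 and λ ≠ 1, and let MC_λ(M) = (Ñ_r,…,Ñ_1). Then for every k ∈ {1,…,r} and every integer l ≥ 2, dim ker((Ñ_k − id)^l) − dim ker((Ñ_k − id)^{l−1}) = dim ker((M_k − λ^{−1}·id)^{l−1}) − dim ker((M_k − λ^{−1}·id)^{l−2}). (Equivalently, every Jordan block J(λ^{−1}, l) of M_k contributes a Jordan block J(1, l+1) to Ñ_k, and all other Jordan blocks of Ñ_k with eigenvalue 1 have length 1.) -/

import Mathlib

open Module LinearMap Submodule

/-- The coefficient endomorphism appearing in the `k`-th row of the convolution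
operator `N_k`. -/
noncomputable def convCoeff {V : Type*} [AddCommGroup V] [Module ℂ V] {r : ℕ}
    (M : Fin r → Module.End ℂ V) (lam : ℂ) (k i : Fin r) : Module.End ℂ V :=
  if i < k then M i - 1 else if i = k then lam • M k else lam • (M i - 1)

/-- The convolution operator `N_k` on `V^r`: it leaves every component `v_j` with
`j ≠ k` unchanged and replaces the `k`-th component by
`(M_1 − 1)v_1 + ⋯ + (M_{k−1} − 1)v_{k−1} + λ M_k v_k + λ(M_{k+1} − 1)v_{k+1} + ⋯ + λ(M_r − 1)v_r`. -/
noncomputable def convOp {V : Type*} [AddCommGroup V] [Module ℂ V] {r : ℕ}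
    (M : Fin r → Module.End ℂ V) (lam : ℂ) (k : Fin r) :
    Module.End ℂ (Fin r → V) :=
  LinearMap.pi fun j =>
    if j = k then ∑ i : Fin r, convCoeff M lam k i ∘ₗ LinearMap.proj i
    else LinearMap.proj j

/-- The subspace `K_k = {(0,…,0,u,0,…,0)ᵀ : u ∈ ker(M_k − 1)}` (`u` in the `k`-th slot). -/
noncomputable def Ksub {V : Type*} [AddCommGroup V] [Module ℂ V] {r : ℕ}
    (M : Fin r → Module.End ℂ V) (k : Fin r) : Submodule ℂ (Fin r → V) :=
  Submodule.pi Set.univ fun j => if j = k then LinearMap.ker (M k - 1) else ⊥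

/-- The subspace `L = ⋂_k ker(N_k − 1)`. -/
noncomputable def Lsub {V : Type*} [AddCommGroup V] [Module ℂ V] {r : ℕ}
    (M : Fin r → Module.End ℂ V) (lam : ℂ) : Submodule ℂ (Fin r → V) :=
  ⨅ k : Fin r, LinearMap.ker (convOp M lam k - 1)

/-- The subspace `K + L` with `K = K_1 ⊕ ⋯ ⊕ K_r`. -/
noncomputable def KLsub {V : Type*} [AddCommGroup V] [Module ℂ V] {r : ℕ}
    (M : Fin r → Module.End ℂ V) (lam : ℂ) : Submodule ℂ (Fin r → V) :=
  (⨆ k : Fin r, Ksub M k) ⊔ Lsub M lam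

/-- The middle convolution operator `Ñ_k` induced by `N_k` on `V^r/(K + L)`. -/
noncomputable def mcOp {V : Type*} [AddCommGroup V] [Module ℂ V] {r : ℕ}
    (M : Fin r → Module.End ℂ V) (lam : ℂ)
    (h : ∀ k : Fin r, KLsub M lam ≤ (KLsub M lam).comap (convOp M lam k))
    (k : Fin r) : Module.End ℂ ((Fin r → V) ⧸ KLsub M lam) :=
  Submodule.mapQ _ _ (convOp M lam k) (h k)

/-- Condition (*): there is no nonzero `v ∈ V` fixed by all `M_j`, `j ≠ i`, which is an
eigenvector of `M_i`. -/
def CondStar {V : Type*} [AddCommGroup V] [Module ℂ V] {r : ℕ}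
    (M : Fin r → Module.End ℂ V) : Prop :=
  ∀ i : Fin r,
    ¬ ∃ v : V, v ≠ 0 ∧ (∀ j : Fin r, j ≠ i → M j v = v) ∧ ∃ a : ℂ, M i v = a • v

/-- Condition (**): there is no codimension-one subspace `W ⊆ V` invariant under all `M_j`
with `(M_j − 1)(V) ⊆ W` for all `j ≠ i`. -/
def CondStarStar {V : Type*} [AddCommGroup V] [Module ℂ V] {r : ℕ}
    (M : Fin r → Module.End ℂ V) : Prop :=
  ∀ i : Fin r,
    ¬ ∃ W : Submodule ℂ V, Module.finrank ℂ (V ⧸ W) = 1 ∧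
      (∀ j : Fin r, W.map (M j) ≤ W) ∧
      ∀ j : Fin r, j ≠ i → LinearMap.range (M j - 1) ≤ W


set_option linter.unusedSectionVars false
set_option maxHeartbeats 1000000

section Aux
lemma finrank_comap_of_le_range {X Y : Type*} [AddCommGroup X] [Module ℂ X]
    [AddCommGroup Y] [Module ℂ Y] [FiniteDimensional ℂ X] [FiniteDimensional ℂ Y]
    (f : X →ₗ[ℂ] Y) (S : Submodule ℂ Y) (hS : S ≤ LinearMap.range f) :
    finrank ℂ (S.comap f) = finrank ℂ (LinearMap.ker f) + finrank ℂ S := by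
  have hker : LinearMap.ker f ≤ S.comap f := fun x hx => by
    simp only [Submodule.mem_comap, LinearMap.mem_ker.mp hx, S.zero_mem]
  set g := f.restrict (p := S.comap f) (q := S) (fun x hx => hx) with hg
  have hsurj : Function.Surjective g := by
    rintro ⟨s, hs⟩
    obtain ⟨x, hx⟩ := hS hs
    exact ⟨⟨x, by simp [Submodule.mem_comap, hx, hs]⟩, Subtype.ext hx⟩
  have h1 := LinearMap.finrank_range_add_finrank_ker g
  rw [LinearMap.range_eq_top.mpr hsurj, finrank_top] at h1
  have h2 : LinearMap.ker g = (LinearMap.ker f).comap (S.comap f).subtype :=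
    LinearMap.ker_restrict _
  rw [h2] at h1
  rw [(Submodule.comapSubtypeEquivOfLe hker).finrank_eq] at h1
  omega

lemma finrank_map_mkQ_add {X : Type*} [AddCommGroup X] [Module ℂ X] [FiniteDimensional ℂ X]
    (p Q : Submodule ℂ X) (h : p ≤ Q) :
    finrank ℂ (Q.map p.mkQ) + finrank ℂ p = finrank ℂ Q := by
  set π := p.mkQ ∘ₗ Q.subtype with hπ
  have hrange : LinearMap.range π = Q.map p.mkQ := by
    rw [hπ, LinearMap.range_comp, Submodule.range_subtype]
  have hker : LinearMap.ker π = p.comap Q.subtype := by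
    rw [hπ, LinearMap.ker_comp, Submodule.ker_mkQ]
  have h1 := LinearMap.finrank_range_add_finrank_ker π
  rw [hrange, hker, (Submodule.comapSubtypeEquivOfLe h).finrank_eq] at h1
  exact h1

-- pointwise description of powers of a quotient operator
lemma pow_mkQ_comm {X : Type*} [AddCommGroup X] [Module ℂ X]
    (p : Submodule ℂ X) (G : Module.End ℂ X) (F : Module.End ℂ (X ⧸ p))
    (hF : ∀ x, F (p.mkQ x) = p.mkQ (G x)) (l : ℕ) :
    ∀ x, (F ^ l) (p.mkQ x) = p.mkQ ((G ^ l) x) := by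
  induction l with
  | zero => intro x; simp
  | succ n ih =>
    intro x
    rw [pow_succ, pow_succ]
    simp only [Module.End.mul_apply, hF]
    exact ih (G x)

lemma ker_of_mkQ_comm {X : Type*} [AddCommGroup X] [Module ℂ X]
    (p : Submodule ℂ X) (G : Module.End ℂ X) (F : Module.End ℂ (X ⧸ p))
    (hF : ∀ x, F (p.mkQ x) = p.mkQ (G x)) :
    LinearMap.ker F = (p.comap G).map p.mkQ := by
  ext y
  obtain ⟨x, rfl⟩ := p.mkQ_surjective y
  constructor
  · intro hy
    rw [LinearMap.mem_ker, hF, Submodule.mkQ_apply, Submodule.Quotient.mk_eq_zero] at hy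
    exact ⟨x, hy, rfl⟩
  · rintro ⟨z, hz, hzx⟩
    rw [LinearMap.mem_ker]
    have : p.mkQ z = p.mkQ x := hzx
    rw [← this, hF]
    simpa [Submodule.Quotient.mk_eq_zero] using hz

/-- The row map `A_k`. -/
noncomputable def rowMap {V : Type*} [AddCommGroup V] [Module ℂ V] {r : ℕ}
    (M : Fin r → Module.End ℂ V) (lam : ℂ) (k : Fin r) : (Fin r → V) →ₗ[ℂ] V :=
  (∑ i : Fin r, convCoeff M lam k i ∘ₗ LinearMap.proj i) - LinearMap.proj k

/-- Inclusion of `V` in the `k`-th slot. -/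
noncomputable def incl {V : Type*} [AddCommGroup V] [Module ℂ V] {r : ℕ}
    (k : Fin r) : V →ₗ[ℂ] (Fin r → V) :=
  LinearMap.single ℂ (fun _ : Fin r => V) k

end Aux

section Aux2
variable {V : Type*} [AddCommGroup V] [Module ℂ V] {r : ℕ}
  (M : Fin r → Module.End ℂ V) (lam : ℂ) (k : Fin r)

lemma convOp_sub_one : convOp M lam k - 1 = (incl k).comp (rowMap M lam k) := by
  apply LinearMap.ext; intro x; funext j
  simp only [LinearMap.sub_apply, Module.End.one_apply, LinearMap.comp_apply, convOp,
    LinearMap.pi_apply, incl, rowMap, LinearMap.single_apply, Pi.sub_apply]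
  by_cases hj : j = k
  · subst hj; simp
  · simp [hj, Pi.single_apply]

lemma rowMap_comp_incl : (rowMap M lam k).comp (incl k) = lam • M k - 1 := by
  ext u
  simp only [LinearMap.comp_apply, rowMap, LinearMap.sub_apply, LinearMap.sum_apply,
    LinearMap.comp_apply, LinearMap.proj_apply, incl, LinearMap.single_apply]
  rw [Finset.sum_eq_single k]
  · simp [convCoeff]
  · intro b _ hb
    simp [Pi.single_apply, hb, convCoeff]
  · simp

lemma convOp_sub_one_pow (m : ℕ) :
    (convOp M lam k - 1) ^ (m + 1)
      = (incl k).comp ((((lam • M k - 1 : Module.End ℂ V) ^ m) :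
          Module.End ℂ V).comp (rowMap M lam k)) := by
  induction m with
  | zero =>
    rw [pow_one, convOp_sub_one M lam k, pow_zero, Module.End.one_eq_id, LinearMap.id_comp]
  | succ n ih =>
    have : (convOp M lam k - 1) ^ (n + 2)
        = ((convOp M lam k - 1) ^ (n + 1)) * (convOp M lam k - 1) := by
      rw [pow_succ]
    rw [this, ih, convOp_sub_one M lam k]
    have hmul : ∀ (f g : Module.End ℂ (Fin r → V)), f * g = f.comp g := fun _ _ => rfl
    rw [hmul]
    apply LinearMap.ext; intro x
    simp only [LinearMap.comp_apply]
    have : (rowMap M lam k) ((incl k) ((rowMap M lam k) x))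
        = (lam • M k - 1) ((rowMap M lam k) x) := by
      rw [← LinearMap.comp_apply, rowMap_comp_incl]
    rw [this]
    have hp : ∀ (u : V), ((lam • M k - 1 : Module.End ℂ V) ^ (n+1)) u
        = ((lam • M k - 1 : Module.End ℂ V) ^ n) ((lam • M k - 1) u) := by
      intro u; rw [pow_succ, Module.End.mul_apply]
    rw [hp]

lemma mem_Ksub_single (u : V) (hu : u ∈ LinearMap.ker (M k - 1)) :
    Pi.single k u ∈ Ksub M k := by
  rw [Ksub, Submodule.mem_pi]
  intro i _
  by_cases hik : i = k
  · subst hik; simpa using hu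
  · simp [hik, Pi.single_apply]

lemma comap_incl_KL (hstar : CondStar M) (hlam0 : lam ≠ 0) (hlam1 : lam ≠ 1) :
    (KLsub M lam).comap (incl k) = LinearMap.ker (M k - 1) := by
  apply le_antisymm
  · -- hard direction
    intro u hu
    rw [Submodule.mem_comap, KLsub] at hu
    obtain ⟨κ, hκ, ℓ, hℓ, hsum⟩ := Submodule.mem_sup.mp hu
    -- κ componentwise fixed
    have hκfix : ∀ j : Fin r, (M j) (κ j) = κ j := by
      intro j
      have hKpi : κ ∈ Submodule.pi Set.univ (fun j => LinearMap.ker (M j - 1)) := by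
        refine (iSup_le (fun j => ?_) : (⨆ j : Fin r, Ksub M j) ≤ _) hκ
        intro x hx
        rw [Ksub, Submodule.mem_pi] at hx
        rw [Submodule.mem_pi]
        intro i _
        have := hx i trivial
        by_cases hij : i = j
        · subst hij; simpa using this
        · simp only [hij, if_false, Submodule.mem_bot] at this
          simp [this]
      have := (Submodule.mem_pi.mp hKpi) j trivial
      have h0 : (M j - 1) (κ j) = 0 := this
      rw [LinearMap.sub_apply, Module.End.one_apply, sub_eq_zero] at h0
      exact h0
    have hsingle : (incl k) u = Pi.single k u := rfl
    rw [hsingle] at hsum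
    -- components of ℓ
    have hℓfix : ∀ j : Fin r, j ≠ k → (M j) (ℓ j) = ℓ j := by
      intro j hj
      have hcf := congrFun hsum j
      simp only [Pi.add_apply] at hcf
      rw [Pi.single_apply, if_neg (fun hcontra => hj hcontra)] at hcf
      have : ℓ j = -κ j := by
        have := hcf
        linear_combination (norm := abel) this
      rw [this, map_neg, hκfix j]
    -- row equations of ℓ
    have hrow : ∀ j : Fin r, ∑ i : Fin r, (convCoeff M lam j i) (ℓ i) = ℓ j := by
      intro j
      have h1 : ℓ ∈ LinearMap.ker (convOp M lam j - 1) := (Submodule.mem_iInf _).mp hℓ j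
      have h2 : (convOp M lam j) ℓ = ℓ := by
        have h3 := LinearMap.mem_ker.mp h1
        rw [LinearMap.sub_apply, Module.End.one_apply, sub_eq_zero] at h3
        exact h3
      have h4 := congrFun h2 j
      simpa [convOp, LinearMap.pi_apply] using h4
    set v := ℓ k with hv
    -- vanishing of off-diagonal, off-k terms
    have hvanish : ∀ i : Fin r, i ≠ k → (convCoeff M lam k i) (ℓ i) = 0
        ∧ ∀ j : Fin r, j ≠ k → i ≠ j → (convCoeff M lam j i) (ℓ i) = 0 := by
      intro i hik
      have hz : (M i - 1) (ℓ i) = 0 := by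
        rw [LinearMap.sub_apply, Module.End.one_apply, hℓfix i hik, sub_self]
      constructor
      · rw [convCoeff]
        by_cases h1 : i < k
        · rw [if_pos h1]; exact hz
        · rw [if_neg h1, if_neg hik, LinearMap.smul_apply, hz, smul_zero]
      · intro j hjk hij
        rw [convCoeff]
        by_cases h1 : i < j
        · rw [if_pos h1]; exact hz
        · rw [if_neg h1, if_neg hij, LinearMap.smul_apply, hz, smul_zero]
    -- row k : lam • M k v = v
    have hEq1 : lam • (M k) v = v := by
      have hk := hrow k
      rw [Finset.sum_eq_single k (fun i _ hik => (hvanish i hik).1) (by simp)] at hk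
      rw [convCoeff, if_neg (lt_irrefl k), if_pos rfl] at hk
      simpa using hk
    have hMkv : (M k) v = lam⁻¹ • v := by
      have := congrArg (fun w => lam⁻¹ • w) hEq1
      simpa [smul_smul, inv_mul_cancel₀ hlam0] using this
    -- rows j ≠ k
    have hjfix : ∀ j : Fin r, j ≠ k → (M j) v = v := by
      intro j hjk
      have hj := hrow j
      rw [← Finset.sum_subset (Finset.subset_univ {j, k})
        (fun i _ hi => by
          simp only [Finset.mem_insert, Finset.mem_singleton, not_or] at hi
          exact (hvanish i hi.2).2 j hjk hi.1)] at hj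
      rw [Finset.sum_pair hjk] at hj
      have hdiag : (convCoeff M lam j j) (ℓ j) = lam • ℓ j := by
        rw [convCoeff, if_neg (lt_irrefl j), if_pos rfl, LinearMap.smul_apply, hℓfix j hjk]
      rw [hdiag] at hj
      by_cases hkj : k < j
      · -- coefficient is M k - 1
        rw [convCoeff, if_pos hkj] at hj
        have hj' : lam • ℓ j + ((M k) v - v) = ℓ j := by
          simpa using hj
        -- (lam - 1) • (lam • ℓ j - v) = 0
        have hz : (lam - 1) • (lam • ℓ j - v) = 0 := by
          linear_combination (norm := module) lam • hj' - hEq1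
        have hlv : lam • ℓ j = v := by
          rcases smul_eq_zero.mp hz with h | h
          · exact absurd (by linear_combination h) hlam1
          · exact sub_eq_zero.mp h
        have := hℓfix j hjk
        calc (M j) v = (M j) (lam • ℓ j) := by rw [hlv]
          _ = lam • (M j) (ℓ j) := map_smul _ _ _
          _ = lam • ℓ j := by rw [this]
          _ = v := hlv
      · -- j < k : coefficient is lam • (M k - 1)
        have hkj' : ¬ (k = j) := fun hc => hjk hc.symm
        rw [convCoeff, if_neg hkj, if_neg hkj'] at hj
        have hj' : lam • ℓ j + lam • ((M k) v - v) = ℓ j := by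
          simpa using hj
        have hz : (lam - 1) • (ℓ j - v) = 0 := by
          linear_combination (norm := module) hj' - hEq1
        have hlv : ℓ j = v := by
          rcases smul_eq_zero.mp hz with h | h
          · exact absurd (by linear_combination h) hlam1
          · exact sub_eq_zero.mp h
        rw [← hlv, hℓfix j hjk, hlv]
    -- condition (*) forces v = 0
    have hv0 : v = 0 := by
      by_contra hvne
      exact hstar k ⟨v, hvne, hjfix, lam⁻¹, hMkv⟩
    -- conclude
    have hck := congrFun hsum k
    simp only [Pi.add_apply, Pi.single_eq_same] at hck
    rw [← hv, hv0, add_zero] at hck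
    rw [LinearMap.mem_ker, LinearMap.sub_apply, Module.End.one_apply, ← hck, hκfix k, sub_self]
  · intro u hu
    rw [Submodule.mem_comap]
    apply Submodule.mem_sup_left
    exact (le_iSup (fun j : Fin r => Ksub M j) k) (mem_Ksub_single M k u hu)


end Aux2

section Aux3
variable {V : Type*} [AddCommGroup V] [Module ℂ V] [FiniteDimensional ℂ V] {r : ℕ}
  (M : Fin r → Module.End ℂ V) (lam : ℂ) (k : Fin r)

lemma rowMap_single (i : Fin r) (v : V) :
    rowMap M lam k (Pi.single i v) = (convCoeff M lam k i) v - (Pi.single i v : Fin r → V) k := by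
  simp only [rowMap, LinearMap.sub_apply, LinearMap.sum_apply, LinearMap.comp_apply,
    LinearMap.proj_apply]
  congr 1
  rw [Finset.sum_eq_single i (fun b _ hb => by
    rw [Pi.single_apply, if_neg hb, map_zero]) (by simp),
    Pi.single_eq_same]

lemma rowMap_surjective (hss : CondStarStar M) (hlam0 : lam ≠ 0) :
    Function.Surjective (rowMap M lam k) := by
  rw [← LinearMap.range_eq_top]
  by_contra hne
  -- find codimension-one W containing range
  set p := LinearMap.range (rowMap M lam k) with hp
  have hplt : p < ⊤ := lt_top_iff_ne_top.mpr hne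
  have : Nontrivial (V ⧸ p) := Submodule.Quotient.nontrivial_iff.mpr hplt.ne
  have hpos : 0 < finrank ℂ (V ⧸ p) := finrank_pos
  set b := Module.finBasis ℂ (V ⧸ p) with hb
  set φ := b.coord ⟨0, hpos⟩ with hφ
  have hφb : φ (b ⟨0, hpos⟩) = 1 := by
    rw [hφ, Basis.coord_apply, Basis.repr_self, Finsupp.single_eq_same]
  have hφsurj : Function.Surjective φ := by
    intro c
    exact ⟨c • b ⟨0, hpos⟩, by rw [map_smul, hφb, smul_eq_mul, mul_one]⟩
  set ψ := φ ∘ₗ p.mkQ with hψ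
  have hψsurj : Function.Surjective ψ := hφsurj.comp p.mkQ_surjective
  set W := LinearMap.ker ψ with hW
  have hWrank : finrank ℂ (V ⧸ W) = 1 := by
    rw [(LinearMap.quotKerEquivOfSurjective ψ hψsurj).finrank_eq, finrank_self]
  have hpW : p ≤ W := by
    intro x hx
    rw [hW, LinearMap.mem_ker, hψ, LinearMap.comp_apply]
    have : p.mkQ x = 0 := by
      rw [Submodule.mkQ_apply, Submodule.Quotient.mk_eq_zero]; exact hx
    rw [this, map_zero]
  -- range facts
  have hmem : ∀ x : Fin r → V, rowMap M lam k x ∈ W := fun x => hpW ⟨x, rfl⟩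
  have hr2 : ∀ v : V, lam • (M k) v - v ∈ W := by
    intro v
    have h1 := hmem (Pi.single k v)
    rw [rowMap_single] at h1
    simp only [Pi.single_eq_same] at h1
    rw [convCoeff, if_neg (lt_irrefl k), if_pos rfl, LinearMap.smul_apply] at h1
    exact h1
  have hr1 : ∀ i : Fin r, i ≠ k → ∀ v : V, (M i) v - v ∈ W := by
    intro i hik v
    have h1 := hmem (Pi.single i v)
    rw [rowMap_single] at h1
    rw [Pi.single_eq_of_ne (Ne.symm hik), sub_zero, convCoeff] at h1
    by_cases h2 : i < k
    · rw [if_pos h2] at h1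
      simpa using h1
    · rw [if_neg h2, if_neg hik, LinearMap.smul_apply] at h1
      have h3 := W.smul_mem lam⁻¹ h1
      rw [smul_smul, inv_mul_cancel₀ hlam0, one_smul] at h3
      simpa using h3
  -- W invariant under all M j
  have hinv : ∀ j : Fin r, W.map (M j) ≤ W := by
    intro j
    rintro _ ⟨w, hw, rfl⟩
    by_cases hjk : j = k
    · subst hjk
      have h1 : lam • (M j) w ∈ W := by
        have := W.add_mem (hr2 w) hw
        simpa using this
      have h2 := W.smul_mem lam⁻¹ h1
      rwa [smul_smul, inv_mul_cancel₀ hlam0, one_smul] at h2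
    · have := W.add_mem (hr1 j hjk w) hw
      simpa using this
  exact hss k ⟨W, hWrank, hinv, fun j hj => by
    rintro _ ⟨v, rfl⟩
    simpa using hr1 j hj v⟩


lemma comap_pow_le {X : Type*} [AddCommGroup X] [Module ℂ X]
    (p : Submodule ℂ X) (G : Module.End ℂ X) (hst : p ≤ p.comap G) (n : ℕ) :
    p ≤ p.comap (G ^ n) := by
  induction n with
  | zero => intro x hx; simpa using hx
  | succ n ih =>
    intro x hx
    rw [Submodule.mem_comap, pow_succ, Module.End.mul_apply]
    exact ih (hst hx)

lemma ker_fixed_le_range_pow (hlam1 : lam ≠ 1) (m : ℕ) :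
    LinearMap.ker (M k - 1) ≤ LinearMap.range ((lam • M k - 1 : Module.End ℂ V) ^ m) := by
  have hT : ∀ u ∈ LinearMap.ker (M k - 1), (lam • M k - 1 : Module.End ℂ V) u = (lam - 1) • u := by
    intro u hu
    have h1 : (M k) u = u := by
      have := LinearMap.mem_ker.mp hu
      rw [LinearMap.sub_apply, Module.End.one_apply, sub_eq_zero] at this
      exact this
    rw [LinearMap.sub_apply, Module.End.one_apply, LinearMap.smul_apply, h1, sub_smul, one_smul]
  have key : ∀ m : ℕ, ∀ u ∈ LinearMap.ker (M k - 1), ∃ w ∈ LinearMap.ker (M k - 1),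
      (((lam • M k - 1 : Module.End ℂ V)) ^ m) w = u := by
    intro m
    induction m with
    | zero => intro u hu; exact ⟨u, hu, by simp⟩
    | succ n ih =>
      intro u hu
      have hne : lam - 1 ≠ 0 := sub_ne_zero.mpr hlam1
      have hw0 : (lam - 1)⁻¹ • u ∈ LinearMap.ker (M k - 1) :=
        Submodule.smul_mem _ _ hu
      have hTw0 : (lam • M k - 1 : Module.End ℂ V) ((lam - 1)⁻¹ • u) = u := by
        rw [hT _ hw0, smul_smul, mul_inv_cancel₀ hne, one_smul]
      obtain ⟨w, hw, hwm⟩ := ih ((lam - 1)⁻¹ • u) hw0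
      refine ⟨w, hw, ?_⟩
      rw [pow_succ', Module.End.mul_apply, hwm, hTw0]
  intro u hu
  obtain ⟨w, _, hw⟩ := key m u hu
  exact ⟨w, hw⟩

lemma ker_pow_shift (hlam0 : lam ≠ 0) (m : ℕ) :
    LinearMap.ker ((lam • M k - 1 : Module.End ℂ V) ^ m)
      = LinearMap.ker ((M k - lam⁻¹ • 1) ^ m) := by
  have h1 : (lam • M k - 1 : Module.End ℂ V) = lam • (M k - lam⁻¹ • 1) := by
    rw [smul_sub, smul_smul, mul_inv_cancel₀ hlam0, one_smul]
  rw [h1, smul_pow, LinearMap.ker_smul _ _ (pow_ne_zero m hlam0)]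

lemma key_dim (hstar : CondStar M) (hstarstar : CondStarStar M)
    (hlam0 : lam ≠ 0) (hlam1 : lam ≠ 1)
    (h : ∀ k : Fin r, KLsub M lam ≤ (KLsub M lam).comap (convOp M lam k)) (m : ℕ) :
    finrank ℂ (LinearMap.ker ((mcOp M lam h k - 1) ^ (m + 1)))
        + finrank ℂ (KLsub M lam)
      = finrank ℂ (LinearMap.ker (rowMap M lam k))
        + finrank ℂ (LinearMap.ker ((M k - lam⁻¹ • (1 : Module.End ℂ V)) ^ m))
        + finrank ℂ (LinearMap.ker (M k - (1 : Module.End ℂ V))) := by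
  have hqc : ∀ x, (mcOp M lam h k - 1) ((KLsub M lam).mkQ x)
      = (KLsub M lam).mkQ ((convOp M lam k - 1) x) := by
    intro x
    simp [mcOp, LinearMap.sub_apply, Submodule.mapQ_apply, Submodule.mkQ_apply,
      Submodule.Quotient.mk_sub]
  have hpow := pow_mkQ_comm (KLsub M lam) (convOp M lam k - 1) (mcOp M lam h k - 1) hqc (m + 1)
  have hker := ker_of_mkQ_comm (KLsub M lam) ((convOp M lam k - 1) ^ (m + 1))
      ((mcOp M lam h k - 1) ^ (m + 1)) hpow
  have hstep : KLsub M lam ≤ (KLsub M lam).comap (convOp M lam k - 1) := by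
    intro x hx
    rw [Submodule.mem_comap, LinearMap.sub_apply, Module.End.one_apply]
    exact Submodule.sub_mem _ (h k hx) hx
  have hle := comap_pow_le (KLsub M lam) (convOp M lam k - 1) hstep (m + 1)
  have h1 := finrank_map_mkQ_add (KLsub M lam)
      (Submodule.comap ((convOp M lam k - 1) ^ (m + 1)) (KLsub M lam)) hle
  rw [← hker] at h1
  have hcomap : Submodule.comap ((convOp M lam k - 1) ^ (m + 1)) (KLsub M lam)
      = Submodule.comap (rowMap M lam k)
          (Submodule.comap ((lam • M k - 1 : Module.End ℂ V) ^ m)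
            (Submodule.comap (incl k) (KLsub M lam))) := by
    rw [convOp_sub_one_pow M lam k m, Submodule.comap_comp, Submodule.comap_comp]
  rw [comap_incl_KL M lam k hstar hlam0 hlam1] at hcomap
  have hsurjA := rowMap_surjective M lam k hstarstar hlam0
  have hQ := finrank_comap_of_le_range (rowMap M lam k)
      (Submodule.comap ((lam • M k - 1 : Module.End ℂ V) ^ m) (LinearMap.ker (M k - 1)))
      (by rw [LinearMap.range_eq_top.mpr hsurjA]; exact le_top)
  have hS := finrank_comap_of_le_range ((lam • M k - 1 : Module.End ℂ V) ^ m)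
      (LinearMap.ker (M k - 1)) (ker_fixed_le_range_pow M lam k hlam1 m)
  rw [ker_pow_shift M lam k hlam0 m] at hS
  rw [hcomap, hQ, hS] at h1
  omega

end Aux3

/-- for `λ ≠ 0, 1`, the Jordan blocks of `Ñ_k` with eigenvalue `1` and
length `≥ 2` come exactly from the Jordan blocks `J(λ⁻¹, l−1)` of `M_k` (length raised
by one): for all `l ≥ 2`,
`dim ker((Ñ_k − 1)^l) − dim ker((Ñ_k − 1)^{l−1}) = dim ker((M_k − λ⁻¹)^{l−1}) − dim ker((M_k − λ⁻¹)^{l−2})`. -/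
theorem middle_convolution_jordan_eigenvalue_one
    {V : Type*} [AddCommGroup V] [Module ℂ V] [FiniteDimensional ℂ V]
    {r : ℕ} (hr : 1 ≤ r)
    (M : Fin r → Module.End ℂ V) (hM : ∀ i : Fin r, Function.Bijective (M i))
    (hstar : CondStar M) (hstarstar : CondStarStar M)
    (lam : ℂ) (hlam0 : lam ≠ 0) (hlam1 : lam ≠ 1)
    (h : ∀ k : Fin r, KLsub M lam ≤ (KLsub M lam).comap (convOp M lam k))
    (k : Fin r) :
    ∀ l : ℕ, 2 ≤ l →
      (Module.finrank ℂ (LinearMap.ker ((mcOp M lam h k - 1) ^ l)) : ℤ) -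
        (Module.finrank ℂ (LinearMap.ker ((mcOp M lam h k - 1) ^ (l - 1))) : ℤ) =
      (Module.finrank ℂ (LinearMap.ker ((M k - lam⁻¹ • 1) ^ (l - 1))) : ℤ) -
        (Module.finrank ℂ (LinearMap.ker ((M k - lam⁻¹ • 1) ^ (l - 2))) : ℤ) := by
  intro l hl
  obtain ⟨m, rfl⟩ : ∃ m, l = m + 2 := ⟨l - 2, by omega⟩
  have e1 : m + 2 - 1 = m + 1 := by omega
  have e2 : m + 2 - 2 = m := by omega
  rw [e1, e2]
  have h1 := key_dim M lam k hstar hstarstar hlam0 hlam1 h (m + 1)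
  have h2 := key_dim M lam k hstar hstarstar hlam0 hlam1 h m
  have e3 : m + 1 + 1 = m + 2 := rfl
  rw [e3] at h1
  omega
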